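/- Let μ, i, j be integers with μ > 0 and 0 ≤ j < i ≤ 2^(μ+1) − 1. Then μ + 1 ≥ ν(i − j) + ν(C(i, j)), where ν is the 2-adic valuation and C(i,j) the binomial coefficient. -/

import Mathlib

/-- binary digit sum -/
def s2 (n : ℕ) : ℕ := (Nat.digits 2 n).sum

/-- 2-adic valuation -/
def nu (n : ℕ) : ℕ := padicValNat 2 n
theorem stmt4 (μ i j : ℕ) (hμ : 0 < μ) (hji : j < i) (hi : i ≤ 2 ^ (μ + 1) - 1) :
    μ + 1 ≥ nu (i - j) + nu (Nat.choose i j) := by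
  haveI : Fact (Nat.Prime 2) := ⟨Nat.prime_two⟩
  set d := i - j with hd
  have hd0 : 0 < d := Nat.sub_pos_of_lt hji
  set v := nu d with hv
  have hdvd : (2 : ℕ) ^ v ∣ d := pow_padicValNat_dvd
  have hilt : i < 2 ^ (μ + 1) :=
    lt_of_le_of_lt hi (Nat.sub_lt (Nat.pow_pos (n := _) (by norm_num)) one_pos)
  have hvμ : v ≤ μ := by
    have h2v : (2 : ℕ) ^ v ≤ d := Nat.le_of_dvd hd0 hdvd
    have hlt : (2 : ℕ) ^ v < 2 ^ (μ + 1) :=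
      lt_of_le_of_lt (h2v.trans (Nat.sub_le _ _)) hilt
    have := (Nat.pow_lt_pow_iff_right (a := 2) one_lt_two).mp hlt
    omega
  have hlog : Nat.log 2 i < μ + 2 := by
    have : i < 2 ^ (μ + 2) := hilt.trans (Nat.pow_lt_pow_right one_lt_two (by omega))
    exact Nat.log_lt_of_lt_pow (by omega) this
  have hkum := padicValNat_choose (p := 2) (n := i) (k := j) (b := μ + 2) hji.le hlog
  have hsub : ((Finset.Ico 1 (μ + 2)).filter fun t => 2 ^ t ≤ j % 2 ^ t + (i - j) % 2 ^ t)
      ⊆ Finset.Ico (v + 1) (μ + 2) := by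
    intro t ht
    simp only [Finset.mem_filter, Finset.mem_Ico] at ht ⊢
    obtain ⟨⟨ht1, ht2⟩, hcarry⟩ := ht
    refine ⟨?_, ht2⟩
    by_contra h
    push_neg at h
    have htv : t ≤ v := by omega
    have hdvd' : (2 : ℕ) ^ t ∣ d := dvd_trans (pow_dvd_pow 2 htv) hdvd
    have hdm : d % 2 ^ t = 0 := Nat.eq_zero_of_dvd_of_lt hdvd' |> fun _ => Nat.mod_eq_zero_of_dvd hdvd'
    have hjm : j % 2 ^ t < 2 ^ t := Nat.mod_lt _ (Nat.pow_pos (n := _) (by norm_num))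
    rw [← hd] at hcarry
    omega
  have hcard : ((Finset.Ico 1 (μ + 2)).filter fun t => 2 ^ t ≤ j % 2 ^ t + (i - j) % 2 ^ t).card
      ≤ μ + 1 - v := by
    calc _ ≤ (Finset.Ico (v + 1) (μ + 2)).card := Finset.card_le_card hsub
    _ = μ + 1 - v := by rw [Nat.card_Ico]; omega
  have : nu (Nat.choose i j) ≤ μ + 1 - v := by
    rw [nu, hkum]; exact hcard
  omega
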